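/- Let a, b, N be positive integers such that both a and b are coprime to N. Then every element of vrm(|Γ(a,b,N)|) other than (N,0,0), (0,N,0), (0,0,N) is of the form (x, |ax|_N, |bx|_N) for some integer x with 1 ≤ x ≤ N/2. -/
import Mathlib


/-- The box `Π(A)` spanned by a (finite nonempty) set `A ⊆ ℝⁿ_{≥0}`:
all points with nonnegative coordinates bounded by the coordinatewise maxima of `A`. -/
def box {n : ℕ} (A : Set (Fin n → ℝ)) : Set (Fin n → ℝ) :=
  {x | ∀ i, 0 ≤ x i ∧ x i ≤ sSup ((fun p => p i) '' A)}

/-- The set of Voronoi relative minima of `S`: points `g ∈ S` such that the box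
`Π({g})` contains no point of `S \ {g}`. -/
def vrm {n : ℕ} (S : Set (Fin n → ℝ)) : Set (Fin n → ℝ) :=
  {g | g ∈ S ∧ ∀ p ∈ S, p ≠ g → p ∉ box {g}}

/-- A nonempty finite subset `F ⊆ vrm S` is minimal if the box `Π(F)` contains
no point of `vrm S \ F`. -/
def IsMinimal {n : ℕ} (S F : Set (Fin n → ℝ)) : Prop :=
  F.Nonempty ∧ F.Finite ∧ F ⊆ vrm S ∧ ∀ p ∈ vrm S, p ∉ F → p ∉ box F

/-- `p` is a point on the `j`-th coordinate axis, different from the origin. -/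
def OnAxis (j : Fin 3) (p : Fin 3 → ℝ) : Prop :=
  p ≠ 0 ∧ ∀ k, k ≠ j → p k = 0

/-- `S ⊆ ℝ³` is axial if it contains a point on each of the three coordinate axes. -/
def Axial (S : Set (Fin 3 → ℝ)) : Prop :=
  ∀ j : Fin 3, ∃ p ∈ S, ∀ k, k ≠ j → p k = 0

/-- A finite axial set `S ⊆ ℝ³_{≥0}` is in general position if (i) each coordinate
plane contains exactly two points of `S`, neither at the origin, lying on the two
coordinate axes contained in that plane, and (ii) every other plane parallel to a
coordinate plane contains at most one point of `S`. -/
def GeneralPosition (S : Set (Fin 3 → ℝ)) : Prop :=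
  (∀ i : Fin 3, ∃ p q : Fin 3 → ℝ, p ≠ q ∧ {r | r ∈ S ∧ r i = 0} = {p, q} ∧
    ∃ j k : Fin 3, j ≠ i ∧ k ≠ i ∧ j ≠ k ∧ OnAxis j p ∧ OnAxis k q) ∧
  (∀ i : Fin 3, ∀ c : ℝ, c ≠ 0 → {r | r ∈ S ∧ r i = c}.Subsingleton)

/-- The rank-1 lattice `Γ(a,b,N) = {m₁·(1,a,b) + m₂·(0,N,0) + m₃·(0,0,N)} ⊆ ℝ³`. -/
def Gamma (a b N : ℤ) : Set (Fin 3 → ℝ) :=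
  {p | ∃ m₁ m₂ m₃ : ℤ,
    p = ![(m₁ : ℝ), (m₁ : ℝ) * a + (m₂ : ℝ) * N, (m₁ : ℝ) * b + (m₃ : ℝ) * N]}

/-- `|Γ| = {(|x₁|,…,|xₙ|) : x ∈ Γ} \ {0}`. -/
def absSet {n : ℕ} (L : Set (Fin n → ℝ)) : Set (Fin n → ℝ) :=
  {q | (∃ p ∈ L, ∀ i, q i = |p i|) ∧ q ≠ 0}

/-- `|x|_N = min(x mod N, (−x) mod N)`, the distance from `x` to the nearest
multiple of `N`. -/
def distN (N x : ℤ) : ℤ := min (x % N) ((-x) % N)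

lemma distN_nonneg {N x : ℤ} (hN : 0 < N) : 0 ≤ distN N x :=
  le_min (Int.emod_nonneg _ hN.ne') (Int.emod_nonneg _ hN.ne')

lemma emod_le_self' {N x : ℤ} (hN : 0 < N) (hx : 0 ≤ x) : x % N ≤ x := by
  rcases lt_or_ge x N with h | h
  · rw [Int.emod_eq_of_lt hx h]
  · exact le_trans (Int.emod_lt_of_pos x hN).le h

lemma distN_le_abs {N x : ℤ} (hN : 0 < N) : distN N x ≤ |x| := by
  rcases abs_cases x with ⟨h, hx⟩ | ⟨h, hx⟩
  · rw [h]; exact le_trans (min_le_left _ _) (emod_le_self' hN hx)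
  · rw [h]; exact le_trans (min_le_right _ _) (emod_le_self' hN (by omega))

lemma distN_neg {N x : ℤ} : distN N (-x) = distN N x := by
  unfold distN; rw [neg_neg]; exact min_comm _ _

lemma distN_congr {N x y : ℤ} (h : x % N = y % N) : distN N x = distN N y := by
  unfold distN
  rw [h, (Int.ModEq.neg (show Int.ModEq N x y from h) : (-x) % N = (-y) % N)]

lemma two_mul_distN_le {N x : ℤ} (hN : 0 < N) : 2 * distN N x ≤ N := by
  have h1 : 0 ≤ x % N := Int.emod_nonneg _ hN.ne'
  have h2 : x % N < N := Int.emod_lt_of_pos _ hN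
  have h3 : 0 ≤ (-x) % N := Int.emod_nonneg _ hN.ne'
  have h4 : (-x) % N < N := Int.emod_lt_of_pos _ hN
  have h0 : (x % N + (-x) % N) % N = 0 := by rw [← Int.add_emod]; simp
  obtain ⟨t, ht⟩ : N ∣ (x % N + (-x) % N) := Int.dvd_of_emod_eq_zero h0
  have ht0 : 0 ≤ t := nonneg_of_mul_nonneg_right (by omega) hN
  have ht1 : t < 2 := by nlinarith
  have hm1 : distN N x ≤ x % N := min_le_left _ _
  have hm2 : distN N x ≤ (-x) % N := min_le_right _ _
  have hd0 : 0 ≤ distN N x := distN_nonneg hN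
  interval_cases t <;> omega

lemma distN_exists {N x : ℤ} (hN : 0 < N) : ∃ k : ℤ, |x + k * N| = distN N x := by
  rcases min_cases (x % N) ((-x) % N) with ⟨h, _⟩ | ⟨h, _⟩
  · refine ⟨-(x / N), ?_⟩
    have : x + -(x / N) * N = x % N := by rw [Int.emod_def]; ring
    rw [this, abs_of_nonneg (Int.emod_nonneg _ hN.ne')]
    exact h.symm ▸ rfl
  · refine ⟨(-x) / N, ?_⟩
    have : x + (-x) / N * N = -((-x) % N) := by rw [Int.emod_def]; ring
    rw [this, abs_neg, abs_of_nonneg (Int.emod_nonneg _ hN.ne')]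
    exact h.symm ▸ rfl

lemma distN_one_le {N x : ℤ} (hN : 0 < N) (h : x % N ≠ 0) : 1 ≤ distN N x := by
  have h3 : 0 ≤ (-x) % N := Int.emod_nonneg _ hN.ne'
  have h1 : 0 ≤ x % N := Int.emod_nonneg _ hN.ne'
  have h2 : (-x) % N ≠ 0 := by
    intro h0
    apply h
    have : (N:ℤ) ∣ x := (dvd_neg).mp (Int.dvd_of_emod_eq_zero h0)
    exact Int.emod_eq_zero_of_dvd this
  have hm1 : distN N x = min (x % N) ((-x) % N) := rfl
  omega

lemma distN_mul_distN {N : ℤ} (c x : ℤ) :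
    distN N (c * distN N x) = distN N (c * x) := by
  rcases min_cases (x % N) ((-x) % N) with ⟨h, _⟩ | ⟨h, _⟩
  · rw [show distN N x = x % N from h]
    apply distN_congr
    rw [Int.mul_emod, Int.mul_emod c x, Int.emod_emod_of_dvd _ dvd_rfl]
  · rw [show distN N x = (-x) % N from h]
    have h1 : distN N (c * ((-x) % N)) = distN N (c * (-x)) := by
      apply distN_congr
      rw [Int.mul_emod, Int.mul_emod c (-x), Int.emod_emod_of_dvd _ dvd_rfl]
    rw [h1, mul_neg, distN_neg]

lemma distN_mul_abs {N : ℤ} (c x : ℤ) : distN N (c * |x|) = distN N (c * x) := by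
  rcases abs_cases x with ⟨h, _⟩ | ⟨h, _⟩
  · rw [h]
  · rw [h, mul_neg, distN_neg]

lemma mem_box_singleton {n : ℕ} {g x : Fin n → ℝ} :
    x ∈ box {g} ↔ ∀ i, 0 ≤ x i ∧ x i ≤ g i := by
  unfold box
  simp [Set.image_singleton]

lemma mem_absGamma {a b N : ℤ} (m₁ m₂ m₃ : ℤ)
    (h : ¬(m₁ = 0 ∧ m₁ * a + m₂ * N = 0 ∧ m₁ * b + m₃ * N = 0)) :
    (![((|m₁| : ℤ) : ℝ), ((|m₁ * a + m₂ * N| : ℤ) : ℝ), ((|m₁ * b + m₃ * N| : ℤ) : ℝ)])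
      ∈ absSet (Gamma a b N) := by
  constructor
  · refine ⟨![(m₁ : ℝ), (m₁ : ℝ) * a + (m₂ : ℝ) * N, (m₁ : ℝ) * b + (m₃ : ℝ) * N],
      ⟨m₁, m₂, m₃, rfl⟩, ?_⟩
    intro i
    fin_cases i <;> simp
  · intro h0
    apply h
    have h1 := congrFun h0 0
    have h2 := congrFun h0 1
    have h3 := congrFun h0 2
    simp at h1 h2 h3
    refine ⟨h1, ?_, ?_⟩ <;> [exact_mod_cast h2; exact_mod_cast h3]


/-- Let `a, b, N` be positive integers such that both `a` and `b` are coprime to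
`N`. Then every element of `vrm(|Γ(a,b,N)|)` other than `(N,0,0)`, `(0,N,0)`,
`(0,0,N)` is of the form `(x, |ax|_N, |bx|_N)` for some integer `1 ≤ x ≤ N/2`. -/
theorem vrm_mem_form
    (a b N : ℤ) (ha : 1 ≤ a) (hb : 1 ≤ b) (hN : 1 ≤ N)
    (haN : Int.gcd a N = 1) (hbN : Int.gcd b N = 1)
    (p : Fin 3 → ℝ) (hp : p ∈ vrm (absSet (Gamma a b N)))
    (hp1 : p ≠ ![(N : ℝ), 0, 0]) (hp2 : p ≠ ![0, (N : ℝ), 0])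
    (hp3 : p ≠ ![0, 0, (N : ℝ)]) :
    ∃ x : ℤ, 1 ≤ x ∧ 2 * x ≤ N ∧
      p = ![(x : ℝ), (distN N (a * x) : ℝ), (distN N (b * x) : ℝ)] := by
  have hN0 : (0:ℤ) < N := hN
  obtain ⟨⟨⟨p', hp'Γ, habs⟩, hpne⟩, hmin⟩ := hp
  obtain ⟨m₁, m₂, m₃, rfl⟩ := hp'Γ
  have hP0 : p 0 = ((|m₁| : ℤ) : ℝ) := by
    have h := habs 0; simp at h; rw [h]; push_cast; ring
  have hP1 : p 1 = ((|m₁ * a + m₂ * N| : ℤ) : ℝ) := by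
    have h := habs 1; simp at h; rw [h]; push_cast; ring
  have hP2 : p 2 = ((|m₁ * b + m₃ * N| : ℤ) : ℝ) := by
    have h := habs 2; simp at h; rw [h]; push_cast; ring
  have key : ∀ q ∈ absSet (Gamma a b N), (∀ i, q i ≤ p i) → q = p := by
    intro q hq hle
    by_contra hne
    refine hmin q hq hne ?_
    rw [mem_box_singleton]
    intro i
    obtain ⟨⟨q', _, hqa⟩, _⟩ := hq
    exact ⟨by rw [hqa i]; exact abs_nonneg _, hle i⟩
  have hp0nn : (0:ℝ) ≤ p 0 := by rw [hP0]; exact_mod_cast abs_nonneg _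
  have hp1nn : (0:ℝ) ≤ p 1 := by rw [hP1]; exact_mod_cast abs_nonneg _
  have hp2nn : (0:ℝ) ≤ p 2 := by rw [hP2]; exact_mod_cast abs_nonneg _
  by_cases hm1 : m₁ = 0
  · subst hm1
    by_cases hm2 : m₂ = 0
    · by_cases hm3 : m₃ = 0
      · subst hm2; subst hm3
        exact absurd (funext fun i => by
          fin_cases i <;> simp [hP0, hP1, hP2]) hpne
      · -- p should be (0,0,N)
        subst hm2
        have hq := mem_absGamma (a := a) (b := b) (N := N) 0 0 1 (by simp; omega)
        have e : (![((|(0:ℤ)| : ℤ) : ℝ), ((|0 * a + 0 * N| : ℤ) : ℝ),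
            ((|0 * b + 1 * N| : ℤ) : ℝ)]) = ![0, 0, (N : ℝ)] := by
          funext i
          fin_cases i <;> simp [abs_of_nonneg hN0.le]
        rw [e] at hq
        have hle : ∀ i, (![0, 0, (N:ℝ)]) i ≤ p i := by
          intro i
          fin_cases i
          · simpa using hp0nn
          · simpa using hp1nn
          · have hNle : (N:ℤ) ≤ |0 * b + m₃ * N| := by
              rw [zero_mul, zero_add, abs_mul, abs_of_nonneg hN0.le]
              nlinarith [Int.one_le_abs (by omega : m₃ ≠ 0)]
            show (N:ℝ) ≤ p 2
            rw [hP2]; exact_mod_cast hNle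
        exact absurd (key _ hq hle).symm hp3
    · -- p should be (0,N,0)
      have hq := mem_absGamma (a := a) (b := b) (N := N) 0 1 0 (by simp; omega)
      have e : (![((|(0:ℤ)| : ℤ) : ℝ), ((|0 * a + 1 * N| : ℤ) : ℝ),
          ((|0 * b + 0 * N| : ℤ) : ℝ)]) = ![0, (N : ℝ), 0] := by
        funext i
        fin_cases i <;> simp [abs_of_nonneg hN0.le]
      rw [e] at hq
      have hle : ∀ i, (![0, (N:ℝ), 0]) i ≤ p i := by
        intro i
        fin_cases i
        · simpa using hp0nn
        · have hNle : (N:ℤ) ≤ |0 * a + m₂ * N| := by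
            rw [zero_mul, zero_add, abs_mul, abs_of_nonneg hN0.le]
            nlinarith [Int.one_le_abs (by omega : m₂ ≠ 0)]
          show (N:ℝ) ≤ p 1
          rw [hP1]; exact_mod_cast hNle
        · simpa using hp2nn
      exact absurd (key _ hq hle).symm hp2
  · have hX1 : 1 ≤ |m₁| := Int.one_le_abs hm1
    by_cases hXN : |m₁| % N = 0
    · -- p should be (N,0,0)
      have hNX : N ≤ |m₁| := Int.le_of_dvd (by omega) (Int.dvd_of_emod_eq_zero hXN)
      have hq := mem_absGamma (a := a) (b := b) (N := N) N (-a) (-b)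
        (by rintro ⟨h, -⟩; omega)
      have e : (![((|N| : ℤ) : ℝ), ((|N * a + -a * N| : ℤ) : ℝ),
          ((|N * b + -b * N| : ℤ) : ℝ)]) = ![(N : ℝ), 0, 0] := by
        funext i
        fin_cases i <;> simp [abs_of_nonneg hN0.le, mul_comm]
      rw [e] at hq
      have hle : ∀ i, (![(N:ℝ), 0, 0]) i ≤ p i := by
        intro i
        fin_cases i
        · show (N:ℝ) ≤ p 0
          rw [hP0]; exact_mod_cast hNX
        · simpa using hp1nn
        · simpa using hp2nn
      exact absurd (key _ hq hle).symm hp1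
    · set d := distN N |m₁| with hd
      have hd1 : 1 ≤ d := distN_one_le hN0 hXN
      have hd2 : 2 * d ≤ N := two_mul_distN_le hN0
      obtain ⟨k₂, hk₂⟩ := distN_exists (N := N) (x := a * d) hN0
      obtain ⟨k₃, hk₃⟩ := distN_exists (N := N) (x := b * d) hN0
      have hq := mem_absGamma (a := a) (b := b) (N := N) d k₂ k₃
        (by rintro ⟨h, -⟩; omega)
      have e : (![((|d| : ℤ) : ℝ), ((|d * a + k₂ * N| : ℤ) : ℝ),
          ((|d * b + k₃ * N| : ℤ) : ℝ)])
          = ![(d : ℝ), ((distN N (a * d) : ℤ) : ℝ), ((distN N (b * d) : ℤ) : ℝ)] := by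
        funext i
        fin_cases i
        · simp [abs_of_nonneg (by omega : (0:ℤ) ≤ d)]
        · show ((|d * a + k₂ * N| : ℤ) : ℝ) = ((distN N (a * d) : ℤ) : ℝ)
          rw [mul_comm d a, hk₂]
        · show ((|d * b + k₃ * N| : ℤ) : ℝ) = ((distN N (b * d) : ℤ) : ℝ)
          rw [mul_comm d b, hk₃]
      rw [e] at hq
      have hda : distN N (a * d) ≤ |m₁ * a + m₂ * N| := by
        rw [hd, distN_mul_distN, distN_mul_abs]
        have h1 : distN N (a * m₁) = distN N (m₁ * a + m₂ * N) :=
          distN_congr (by rw [Int.add_mul_emod_self_right, mul_comm])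
        rw [h1]; exact distN_le_abs hN0
      have hdb : distN N (b * d) ≤ |m₁ * b + m₃ * N| := by
        rw [hd, distN_mul_distN, distN_mul_abs]
        have h1 : distN N (b * m₁) = distN N (m₁ * b + m₃ * N) :=
          distN_congr (by rw [Int.add_mul_emod_self_right, mul_comm])
        rw [h1]; exact distN_le_abs hN0
      have hled : d ≤ |m₁| := le_trans (min_le_left _ _) (emod_le_self' hN0 (abs_nonneg _))
      have hle : ∀ i, (![(d : ℝ), ((distN N (a * d) : ℤ) : ℝ),
          ((distN N (b * d) : ℤ) : ℝ)]) i ≤ p i := by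
        intro i
        fin_cases i
        · show ((d : ℤ) : ℝ) ≤ p 0
          rw [hP0]; exact_mod_cast hled
        · show ((distN N (a * d) : ℤ) : ℝ) ≤ p 1
          rw [hP1]; exact_mod_cast hda
        · show ((distN N (b * d) : ℤ) : ℝ) ≤ p 2
          rw [hP2]; exact_mod_cast hdb
      exact ⟨d, hd1, hd2, (key _ hq hle).symm⟩
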